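/- Let X_1,…,X_n ∈ {0,1} be independent random variables and let f : {0,1}^n → ℝ be self-bounding, with Z = f(X_1,…,X_n). Then for every λ ∈ ℝ, log E[e^{λ(Z − E[Z])}] ≤ (e^λ − λ − 1) E[Z]. -/

import Mathlib

open MeasureTheory ProbabilityTheory Finset

/-- A function `f : {0,1}ⁿ → ℝ` is self-bounding if there are functions `g i`
not depending on the `i`-th coordinate such that `0 ≤ f(x) − g i x ≤ 1` for all
`x, i` and `∑ᵢ (f(x) − g i x) ≤ f(x)` for all `x`. -/
def SelfBounding {n : ℕ} (f : (Fin n → Bool) → ℝ) : Prop :=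
  ∃ g : Fin n → (Fin n → Bool) → ℝ,
    (∀ (i : Fin n) (x : Fin n → Bool) (b : Bool),
      g i (Function.update x i b) = g i x) ∧
    (∀ (x : Fin n → Bool) (i : Fin n), 0 ≤ f x - g i x ∧ f x - g i x ≤ 1) ∧
    (∀ x : Fin n → Bool, ∑ i, (f x - g i x) ≤ f x)

namespace SB
open Real Filter Topology

noncomputable def W {n : ℕ} (q : Fin n → Bool → ℝ) (x : Fin n → Bool) : ℝ := ∏ i, q i (x i)

noncomputable def Ew {α : Type*} [Fintype α] (w h : α → ℝ) : ℝ := ∑ a, w a * h a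

noncomputable def Ent {α : Type*} [Fintype α] (w Y : α → ℝ) : ℝ :=
  Ew w (fun a => Y a * Real.log (Y a)) - Ew w Y * Real.log (Ew w Y)

noncomputable def entB2 (pt pf u v : ℝ) : ℝ :=
  pt * (u * Real.log u) + pf * (v * Real.log v)
    - (pt * u + pf * v) * Real.log (pt * u + pf * v)

lemma young {y u : ℝ} (hy : 0 ≤ y) : y * u ≤ y * Real.log y - y + Real.exp u := by
  rcases eq_or_lt_of_le hy with h | h
  · simp [← h]; positivity
  · have h1 := Real.add_one_le_exp (u - Real.log y)
    rw [Real.exp_sub, Real.exp_log h] at h1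
    have h2 := (le_div_iff₀ h).mp h1
    nlinarith

lemma mlog {m c : ℝ} (hm : 0 ≤ m) (hc : 0 < c) :
    0 ≤ m * Real.log m - m * Real.log c - m + c := by
  rcases eq_or_lt_of_le hm with h | h
  · simp [← h]; positivity
  · have h1 := Real.log_le_sub_one_of_pos (div_pos hc h)
    rw [Real.log_div hc.ne' h.ne'] at h1
    have h2 : m * (Real.log c - Real.log m) ≤ m * (c / m - 1) :=
      mul_le_mul_of_nonneg_left (by linarith) hm
    have h3 : m * (c / m - 1) = c - m := by field_simp
    nlinarith

lemma entB2_le {pt pf u v c : ℝ} (hpt : 0 ≤ pt) (hpf : 0 ≤ pf) (hpq : pt + pf = 1)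
    (hu : 0 ≤ u) (hv : 0 ≤ v) (hc : 0 < c) :
    entB2 pt pf u v ≤ pt * (u * Real.log u - u * Real.log c - u + c)
      + pf * (v * Real.log v - v * Real.log c - v + c) := by
  have key := mlog (add_nonneg (mul_nonneg hpt hu) (mul_nonneg hpf hv)) hc
  have hpf' : pf = 1 - pt := by linarith
  subst hpf'
  unfold entB2
  nlinarith [key]

lemma mix_pos {pt pf u v : ℝ} (hpt : 0 ≤ pt) (hpf : 0 ≤ pf) (hpq : pt + pf = 1)
    (hu : 0 < u) (hv : 0 < v) : 0 < pt * u + pf * v := by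
  have h1 : pt * u ≥ pt * min u v := mul_le_mul_of_nonneg_left (min_le_left u v) hpt
  have h2 : pf * v ≥ pf * min u v := mul_le_mul_of_nonneg_left (min_le_right u v) hpf
  have h3 : pt * min u v + pf * min u v = min u v := by rw [← add_mul, hpq, one_mul]
  have h4 : 0 < min u v := lt_min hu hv
  linarith

lemma dual_pt {pt pf u v Ut Uf : ℝ} (hpt : 0 ≤ pt) (hpf : 0 ≤ pf) (hpq : pt + pf = 1)
    (hu : 0 < u) (hv : 0 < v) (hU : pt * Real.exp Ut + pf * Real.exp Uf ≤ 1) :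
    pt * u * Ut + pf * v * Uf ≤ entB2 pt pf u v := by
  set s := pt * u + pf * v with hs_def
  have hs : 0 < s := mix_pos hpt hpf hpq hu hv
  have y1 := young (y := u / s) (u := Ut) (by positivity)
  have y2 := young (y := v / s) (u := Uf) (by positivity)
  rw [Real.log_div hu.ne' hs.ne'] at y1
  rw [Real.log_div hv.ne' hs.ne'] at y2
  have h1 : pt * u * Ut ≤ pt * (u * Real.log u - u * Real.log s - u + s * Real.exp Ut) := by
    have := mul_le_mul_of_nonneg_left y1 (by positivity : (0:ℝ) ≤ pt * s)
    have e1 : pt * s * (u / s * Ut) = pt * u * Ut := by field_simp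
    have e2 : pt * s * (u / s * (Real.log u - Real.log s) - u / s + Real.exp Ut)
        = pt * (u * Real.log u - u * Real.log s - u + s * Real.exp Ut) := by
      field_simp
    rw [e1, e2] at this; exact this
  have h2 : pf * v * Uf ≤ pf * (v * Real.log v - v * Real.log s - v + s * Real.exp Uf) := by
    have := mul_le_mul_of_nonneg_left y2 (by positivity : (0:ℝ) ≤ pf * s)
    have e1 : pf * s * (v / s * Uf) = pf * v * Uf := by field_simp
    have e2 : pf * s * (v / s * (Real.log v - Real.log s) - v / s + Real.exp Uf)
        = pf * (v * Real.log v - v * Real.log s - v + s * Real.exp Uf) := by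
      field_simp
    rw [e1, e2] at this; exact this
  have h3 : s * (pt * Real.exp Ut + pf * Real.exp Uf) ≤ s * 1 :=
    mul_le_mul_of_nonneg_left hU hs.le
  have h4 : pt * u * Real.log s + pf * v * Real.log s = s * Real.log s := by
    rw [hs_def]; ring
  unfold entB2
  rw [← hs_def]
  nlinarith

lemma Ew_pos {α : Type*} [Fintype α] {w u : α → ℝ} (hw : ∀ a, 0 ≤ w a)
    (hw1 : ∑ a, w a = 1) (hu : ∀ a, 0 < u a) : 0 < Ew w u := by
  obtain ⟨a, -, ha⟩ := Finset.exists_ne_zero_of_sum_ne_zero (by rw [hw1]; norm_num :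
    ∑ a : α, w a ≠ 0)
  refine Finset.sum_pos' (fun b _ => mul_nonneg (hw b) (hu b).le) ⟨a, Finset.mem_univ a, ?_⟩
  exact mul_pos (lt_of_le_of_ne (hw a) (Ne.symm ha)) (hu a)

lemma Ew_mono {α : Type*} [Fintype α] {w h1 h2 : α → ℝ} (hw : ∀ a, 0 ≤ w a)
    (h : ∀ a, h1 a ≤ h2 a) : Ew w h1 ≤ Ew w h2 :=
  Finset.sum_le_sum fun a _ => mul_le_mul_of_nonneg_left (h a) (hw a)

lemma entB2_Ew_le {α : Type*} [Fintype α] {pt pf : ℝ} (hpt : 0 ≤ pt) (hpf : 0 ≤ pf)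
    (hpq : pt + pf = 1) {w u v : α → ℝ} (hw : ∀ a, 0 ≤ w a) (hw1 : ∑ a, w a = 1)
    (hu : ∀ a, 0 < u a) (hv : ∀ a, 0 < v a) :
    entB2 pt pf (Ew w u) (Ew w v) ≤ Ew w (fun a => entB2 pt pf (u a) (v a)) := by
  have hub : 0 < Ew w u := Ew_pos hw hw1 hu
  have hvb : 0 < Ew w v := Ew_pos hw hw1 hv
  set s := pt * Ew w u + pf * Ew w v with hs_def
  have hs : 0 < s := mix_pos hpt hpf hpq hub hvb
  set Ut := Real.log (Ew w u / s) with hUt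
  set Uf := Real.log (Ew w v / s) with hUf
  have hU : pt * Real.exp Ut + pf * Real.exp Uf ≤ 1 := by
    rw [hUt, hUf, Real.exp_log (by positivity), Real.exp_log (by positivity)]
    have e : pt * (Ew w u / s) + pf * (Ew w v / s) = (pt * Ew w u + pf * Ew w v) / s := by
      ring
    rw [e, ← hs_def, div_self hs.ne']
  have hid : entB2 pt pf (Ew w u) (Ew w v) = pt * Ew w u * Ut + pf * Ew w v * Uf := by
    unfold entB2
    rw [hUt, hUf, Real.log_div hub.ne' hs.ne', Real.log_div hvb.ne' hs.ne', ← hs_def]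
    ring
  have hexpand : pt * Ew w u * Ut + pf * Ew w v * Uf
      = ∑ a, w a * (pt * u a * Ut + pf * v a * Uf) := by
    unfold Ew
    rw [Finset.mul_sum, Finset.mul_sum, Finset.sum_mul, Finset.sum_mul,
      ← Finset.sum_add_distrib]
    exact Finset.sum_congr rfl fun a _ => by ring
  rw [hid, hexpand]
  exact Ew_mono hw fun a => dual_pt hpt hpf hpq (hu a) (hv a) hU

lemma W_nonneg {n : ℕ} {q : Fin n → Bool → ℝ} (hq0 : ∀ i b, 0 ≤ q i b) (x : Fin n → Bool) :
    0 ≤ W q x := Finset.prod_nonneg fun i _ => hq0 i (x i)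

lemma W_sum {n : ℕ} {q : Fin n → Bool → ℝ} (hq1 : ∀ i, q i true + q i false = 1) :
    ∑ x, W q x = 1 := by
  unfold W
  rw [← Fintype.piFinset_univ, ← Finset.prod_univ_sum]
  simp [Fintype.sum_bool, hq1]

lemma sum_cube_succ {n : ℕ} (h : (Fin (n+1) → Bool) → ℝ) :
    ∑ x, h x = ∑ b : Bool, ∑ x : Fin n → Bool, h (Fin.cons b x) := by
  rw [← Equiv.sum_comp (Fin.consEquiv fun _ => Bool) h, Fintype.sum_prod_type]
  rfl

lemma W_cons {n : ℕ} (q : Fin (n+1) → Bool → ℝ) (b : Bool) (x : Fin n → Bool) :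
    W q (Fin.cons b x) = q 0 b * W (fun i => q i.succ) x := by
  unfold W
  rw [Fin.prod_univ_succ]
  simp

lemma Ew_cons {n : ℕ} (q : Fin (n+1) → Bool → ℝ) (h : (Fin (n+1) → Bool) → ℝ) :
    Ew (W q) h = ∑ b : Bool, q 0 b * Ew (W fun i => q i.succ) (fun x => h (Fin.cons b x)) := by
  unfold Ew
  rw [sum_cube_succ (fun x => W q x * h x)]
  refine Finset.sum_congr rfl fun b _ => ?_
  rw [Finset.mul_sum]
  exact Finset.sum_congr rfl fun x _ => by rw [W_cons]; ring

theorem ent_tensor : ∀ (n : ℕ) (q : Fin n → Bool → ℝ), (∀ i b, 0 ≤ q i b) →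
    (∀ i, q i true + q i false = 1) →
    ∀ (Y : (Fin n → Bool) → ℝ), (∀ x, 0 < Y x) →
    ∀ (c : Fin n → (Fin n → Bool) → ℝ), (∀ i x, 0 < c i x) →
    (∀ (i : Fin n) (x : Fin n → Bool) (b : Bool), c i (Function.update x i b) = c i x) →
    Ent (W q) Y ≤ ∑ i, Ew (W q)
      (fun x => Y x * Real.log (Y x) - Y x * Real.log (c i x) - Y x + c i x) := by
  intro n
  induction n with
  | zero =>
    intro q hq0 hq1 Y hY c hc hci
    have hx : ∀ x : Fin 0 → Bool, W q x = 1 := fun x => by simp [W]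
    simp [Ent, Ew, hx, Finset.univ_unique]
  | succ n ih =>
    intro q hq0 hq1 Y hY c hc hci
    set q' : Fin n → Bool → ℝ := fun i => q i.succ with hq'
    set E' : ((Fin n → Bool) → ℝ) → ℝ := Ew (W q') with hE'
    have hq0' : ∀ i b, 0 ≤ q' i b := fun i b => hq0 i.succ b
    have hq1' : ∀ i, q' i true + q' i false = 1 := fun i => hq1 i.succ
    have hW0' : ∀ x, 0 ≤ W q' x := W_nonneg hq0'
    have hWs' : ∑ x, W q' x = 1 := W_sum hq1'
    set pt := q 0 true with hpt_def
    set pf := q 0 false with hpf_def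
    have hpt : 0 ≤ pt := hq0 0 true
    have hpf : 0 ≤ pf := hq0 0 false
    have hpq : pt + pf = 1 := hq1 0
    set Yt : (Fin n → Bool) → ℝ := fun x => Y (Fin.cons true x) with hYt
    set Yf : (Fin n → Bool) → ℝ := fun x => Y (Fin.cons false x) with hYf
    have hEw_cons : ∀ h : (Fin (n+1) → Bool) → ℝ, Ew (W q) h
        = pt * E' (fun x => h (Fin.cons true x)) + pf * E' (fun x => h (Fin.cons false x)) := by
      intro h
      rw [Ew_cons q h, Fintype.sum_bool]
    have chain : Ent (W q) Y = (pt * Ent (W q') Yt + pf * Ent (W q') Yf)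
        + entB2 pt pf (E' Yt) (E' Yf) := by
      have h1 := hEw_cons Y
      have h2 := hEw_cons (fun x => Y x * Real.log (Y x))
      unfold Ent entB2
      rw [h1, h2]
      rw [hE']
      ring
    have hIH : ∀ b : Bool, Ent (W q') (fun x => Y (Fin.cons b x))
        ≤ ∑ i : Fin n, E' (fun x => Y (Fin.cons b x) * Real.log (Y (Fin.cons b x))
            - Y (Fin.cons b x) * Real.log (c i.succ (Fin.cons b x))
            - Y (Fin.cons b x) + c i.succ (Fin.cons b x)) := by
      intro b
      exact ih q' hq0' hq1' _ (fun x => hY _) (fun i x => c i.succ (Fin.cons b x))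
        (fun i x => hc _ _)
        (by intro i x bb
            show c i.succ (Fin.cons b (Function.update x i bb)) = c i.succ (Fin.cons b x)
            rw [Fin.cons_update]
            exact hci i.succ (Fin.cons b x) bb)
    have hB : pt * Ent (W q') Yt + pf * Ent (W q') Yf
        ≤ ∑ i : Fin n, Ew (W q)
            (fun x => Y x * Real.log (Y x) - Y x * Real.log (c i.succ x) - Y x + c i.succ x) := by
      calc pt * Ent (W q') Yt + pf * Ent (W q') Yf
          ≤ pt * (∑ i : Fin n, E' (fun x => Yt x * Real.log (Yt x)
              - Yt x * Real.log (c i.succ (Fin.cons true x)) - Yt x + c i.succ (Fin.cons true x)))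
            + pf * (∑ i : Fin n, E' (fun x => Yf x * Real.log (Yf x)
              - Yf x * Real.log (c i.succ (Fin.cons false x)) - Yf x
              + c i.succ (Fin.cons false x))) := by
            exact add_le_add (mul_le_mul_of_nonneg_left (hIH true) hpt)
              (mul_le_mul_of_nonneg_left (hIH false) hpf)
        _ = ∑ i : Fin n, Ew (W q)
            (fun x => Y x * Real.log (Y x) - Y x * Real.log (c i.succ x) - Y x + c i.succ x) := by
            rw [Finset.mul_sum, Finset.mul_sum, ← Finset.sum_add_distrib]
            exact Finset.sum_congr rfl fun i _ => (hEw_cons (fun x => Y x * Real.log (Y x)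
              - Y x * Real.log (c i.succ x) - Y x + c i.succ x)).symm
    have hlin : ∀ a b : (Fin n → Bool) → ℝ,
        E' (fun x => pt * a x + pf * b x) = pt * E' a + pf * E' b := by
      intro a b
      rw [hE']
      unfold Ew
      rw [Finset.mul_sum, Finset.mul_sum, ← Finset.sum_add_distrib]
      exact Finset.sum_congr rfl fun x _ => by ring
    have hC : entB2 pt pf (E' Yt) (E' Yf)
        ≤ Ew (W q) (fun x => Y x * Real.log (Y x) - Y x * Real.log (c 0 x) - Y x + c 0 x) := by
      have step1 : entB2 pt pf (E' Yt) (E' Yf)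
          ≤ E' (fun x => entB2 pt pf (Yt x) (Yf x)) :=
        entB2_Ew_le hpt hpf hpq hW0' hWs' (fun x => hY _) (fun x => hY _)
      have step2 : E' (fun x => entB2 pt pf (Yt x) (Yf x))
          ≤ E' (fun x => pt * (Yt x * Real.log (Yt x)
              - Yt x * Real.log (c 0 (Fin.cons true x)) - Yt x + c 0 (Fin.cons true x))
            + pf * (Yf x * Real.log (Yf x)
              - Yf x * Real.log (c 0 (Fin.cons false x)) - Yf x + c 0 (Fin.cons false x))) := by
        refine Ew_mono hW0' fun x => ?_
        have hcf : c 0 (Fin.cons false x) = c 0 (Fin.cons true x) := by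
          have e := hci 0 (Fin.cons true x) false
          rwa [Fin.update_cons_zero] at e
        rw [hcf]
        exact entB2_le hpt hpf hpq (hY _).le (hY _).le (hc 0 _)
      have step3 : E' (fun x => pt * (Yt x * Real.log (Yt x)
              - Yt x * Real.log (c 0 (Fin.cons true x)) - Yt x + c 0 (Fin.cons true x))
            + pf * (Yf x * Real.log (Yf x)
              - Yf x * Real.log (c 0 (Fin.cons false x)) - Yf x + c 0 (Fin.cons false x)))
          = Ew (W q) (fun x => Y x * Real.log (Y x) - Y x * Real.log (c 0 x) - Y x + c 0 x) := by
        rw [hlin, hEw_cons (fun x => Y x * Real.log (Y x) - Y x * Real.log (c 0 x) - Y x + c 0 x)]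
      linarith
    rw [Fin.sum_univ_succ]
    linarith [hB, hC, chain]

lemma phi_le {s z : ℝ} (h0 : 0 ≤ z) (h1 : z ≤ 1) :
    Real.exp (s * z) - s * z - 1 ≤ z * (Real.exp s - s - 1) := by
  have hc := convexOn_exp.2 (Set.mem_univ s) (Set.mem_univ 0) h0 (by linarith)
    (by linarith : z + (1 - z) = 1)
  simp only [smul_eq_mul, mul_zero, add_zero, Real.exp_zero, mul_one] at hc
  rw [mul_comm s z]
  nlinarith

lemma exp_sub_one_ne {t : ℝ} (ht : t ≠ 0) : Real.exp t - 1 ≠ 0 := by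
  rcases ht.lt_or_gt with h | h
  · have : Real.exp t < Real.exp 0 := Real.exp_lt_exp.2 h
    rw [Real.exp_zero] at this; intro h0; linarith
  · have : Real.exp 0 < Real.exp t := Real.exp_lt_exp.2 h
    rw [Real.exp_zero] at this; intro h0; linarith


open Real Filter Topology in
lemma cube_core (n : ℕ) (q : Fin n → Bool → ℝ) (hq0 : ∀ i b, 0 ≤ q i b)
    (hq1 : ∀ i, q i true + q i false = 1)
    (f : (Fin n → Bool) → ℝ) (g : Fin n → (Fin n → Bool) → ℝ)
    (hgu : ∀ (i : Fin n) (x : Fin n → Bool) (b : Bool), g i (Function.update x i b) = g i x)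
    (hg01 : ∀ (x : Fin n → Bool) (i : Fin n), 0 ≤ f x - g i x ∧ f x - g i x ≤ 1)
    (hgs : ∀ x, ∑ i, (f x - g i x) ≤ f x) (l : ℝ) :
    Real.log (∑ x, W q x * Real.exp (l * (f x - ∑ y, W q y * f y)))
      ≤ (Real.exp l - l - 1) * ∑ x, W q x * f x := by
  have hW0 : ∀ x, 0 ≤ W q x := W_nonneg hq0
  have hWs : ∑ x, W q x = 1 := W_sum hq1
  set mm : ℝ := ∑ x, W q x * f x with hmm
  set F : ℝ → ℝ := fun t => ∑ x, W q x * Real.exp (t * f x) with hF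
  set A : ℝ → ℝ := fun t => ∑ x, W q x * (Real.exp (t * f x) * f x) with hA
  have hFd : ∀ t, HasDerivAt F (A t) t := by
    intro t
    exact HasDerivAt.fun_sum fun x _ => ((hasDerivAt_mul_const (f x)).exp.const_mul (W q x))
  obtain ⟨x0, -, hx0⟩ := Finset.exists_ne_zero_of_sum_ne_zero
    (by rw [hWs]; norm_num : ∑ x, W q x ≠ 0)
  have hFpos : ∀ t, 0 < F t := by
    intro t
    refine Finset.sum_pos' (fun x _ => mul_nonneg (hW0 x) (Real.exp_pos _).le)
      ⟨x0, Finset.mem_univ x0, ?_⟩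
    exact mul_pos (lt_of_le_of_ne (hW0 x0) (Ne.symm hx0)) (Real.exp_pos _)
  have hF0 : F 0 = 1 := by
    rw [hF]; simp only [zero_mul, Real.exp_zero, mul_one]; exact hWs
  have hA0 : A 0 = mm := by
    rw [hA, hmm]; simp only [zero_mul, Real.exp_zero, one_mul]
  -- the differential inequality
  have key : ∀ t, (1 - Real.exp (-t)) * A t ≤ F t * Real.log (F t) := by
    intro t
    have ht := ent_tensor n q hq0 hq1 (fun x => Real.exp (t * f x)) (fun x => Real.exp_pos _)
      (fun i x => Real.exp (t * g i x)) (fun i x => Real.exp_pos _)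
      (by intro i x b
          show Real.exp (t * g i (Function.update x i b)) = Real.exp (t * g i x)
          rw [hgu i x b])
    have hpoint : ∀ x, (∑ i, (Real.exp (t * f x) * Real.log (Real.exp (t * f x))
        - Real.exp (t * f x) * Real.log (Real.exp (t * g i x))
        - Real.exp (t * f x) + Real.exp (t * g i x)))
        ≤ (Real.exp (-t) + t - 1) * (Real.exp (t * f x) * f x) := by
      intro x
      have hterm : ∀ i : Fin n, Real.exp (t * f x) * Real.log (Real.exp (t * f x))
          - Real.exp (t * f x) * Real.log (Real.exp (t * g i x))
          - Real.exp (t * f x) + Real.exp (t * g i x)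
          ≤ Real.exp (t * f x) * ((f x - g i x) * (Real.exp (-t) + t - 1)) := by
        intro i
        have hz := hg01 x i
        have hb := phi_le (s := -t) hz.1 hz.2
        have he : Real.exp (t * g i x)
            = Real.exp (t * f x) * Real.exp (-t * (f x - g i x)) := by
          rw [← Real.exp_add]; congr 1; ring
        calc Real.exp (t * f x) * Real.log (Real.exp (t * f x))
            - Real.exp (t * f x) * Real.log (Real.exp (t * g i x))
            - Real.exp (t * f x) + Real.exp (t * g i x)
            = Real.exp (t * f x) * (Real.exp (-t * (f x - g i x))
              - (-t) * (f x - g i x) - 1) := by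
              rw [Real.log_exp, Real.log_exp, he]; ring
          _ ≤ Real.exp (t * f x) * ((f x - g i x) * (Real.exp (-t) - (-t) - 1)) :=
              mul_le_mul_of_nonneg_left hb (Real.exp_pos _).le
          _ = Real.exp (t * f x) * ((f x - g i x) * (Real.exp (-t) + t - 1)) := by ring
      have hphi : 0 ≤ Real.exp (-t) + t - 1 := by
        have := Real.add_one_le_exp (-t); linarith
      calc (∑ i, (Real.exp (t * f x) * Real.log (Real.exp (t * f x))
            - Real.exp (t * f x) * Real.log (Real.exp (t * g i x))
            - Real.exp (t * f x) + Real.exp (t * g i x)))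
          ≤ ∑ i, Real.exp (t * f x) * ((f x - g i x) * (Real.exp (-t) + t - 1)) :=
            Finset.sum_le_sum fun i _ => hterm i
        _ = Real.exp (t * f x) * (Real.exp (-t) + t - 1) * ∑ i, (f x - g i x) := by
            rw [Finset.mul_sum]
            exact Finset.sum_congr rfl fun i _ => by ring
        _ ≤ (Real.exp (-t) + t - 1) * (Real.exp (t * f x) * f x) := by
            have := mul_le_mul_of_nonneg_left (hgs x)
              (mul_nonneg (Real.exp_pos (t * f x)).le hphi)
            nlinarith [this]
    have hswap : (∑ i, Ew (W q) (fun x => Real.exp (t * f x) * Real.log (Real.exp (t * f x))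
        - Real.exp (t * f x) * Real.log (Real.exp (t * g i x))
        - Real.exp (t * f x) + Real.exp (t * g i x)))
        = ∑ x, W q x * (∑ i, (Real.exp (t * f x) * Real.log (Real.exp (t * f x))
        - Real.exp (t * f x) * Real.log (Real.exp (t * g i x))
        - Real.exp (t * f x) + Real.exp (t * g i x))) := by
      unfold Ew
      rw [Finset.sum_comm]
      exact Finset.sum_congr rfl fun x _ => by rw [Finset.mul_sum]
    have hR : (∑ i, Ew (W q) (fun x => Real.exp (t * f x) * Real.log (Real.exp (t * f x))
        - Real.exp (t * f x) * Real.log (Real.exp (t * g i x))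
        - Real.exp (t * f x) + Real.exp (t * g i x)))
        ≤ (Real.exp (-t) + t - 1) * A t := by
      rw [hswap]
      calc (∑ x, W q x * (∑ i, (Real.exp (t * f x) * Real.log (Real.exp (t * f x))
          - Real.exp (t * f x) * Real.log (Real.exp (t * g i x))
          - Real.exp (t * f x) + Real.exp (t * g i x))))
          ≤ ∑ x, W q x * ((Real.exp (-t) + t - 1) * (Real.exp (t * f x) * f x)) :=
            Finset.sum_le_sum fun x _ => mul_le_mul_of_nonneg_left (hpoint x) (hW0 x)
        _ = (Real.exp (-t) + t - 1) * A t := by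
            rw [hA, Finset.mul_sum]
            exact Finset.sum_congr rfl fun x _ => by ring
    have hL : Ent (W q) (fun x => Real.exp (t * f x)) = t * A t - F t * Real.log (F t) := by
      have e : (∑ x, W q x * (Real.exp (t * f x) * Real.log (Real.exp (t * f x))))
          = t * ∑ x, W q x * (Real.exp (t * f x) * f x) := by
        rw [Finset.mul_sum]
        exact Finset.sum_congr rfl fun x _ => by rw [Real.log_exp]; ring
      simp only [Ent, Ew, hF, hA]
      rw [e]
    have h5 : t * A t - F t * Real.log (F t) ≤ (Real.exp (-t) + t - 1) * A t := by
      rw [← hL]; exact ht.trans hR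
    linarith
  have key2 : ∀ t, (Real.exp t - 1) * (A t / F t) ≤ Real.exp t * Real.log (F t) := by
    intro t
    have h1 := mul_le_mul_of_nonneg_left (key t) (Real.exp_pos t).le
    have e2 : Real.exp t * ((1 - Real.exp (-t)) * A t) = (Real.exp t - 1) * A t := by
      rw [Real.exp_neg]
      have h3 := Real.exp_ne_zero t
      field_simp
    rw [e2] at h1
    rw [← mul_div_assoc, div_le_iff₀ (hFpos t)]
    nlinarith [h1]
  have hGd : ∀ t, HasDerivAt (fun t => Real.log (F t)) (A t / F t) t :=
    fun t => (hFd t).log (hFpos t).ne'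
  have hHd : ∀ t, t ≠ 0 → HasDerivAt (fun t => Real.log (F t) / (Real.exp t - 1))
      ((A t / F t * (Real.exp t - 1) - Real.log (F t) * Real.exp t) / (Real.exp t - 1) ^ 2) t :=
    fun t ht => (hGd t).div ((Real.hasDerivAt_exp t).sub_const 1) (exp_sub_one_ne ht)
  have hHd_nonpos : ∀ t, t ≠ 0 →
      deriv (fun t => Real.log (F t) / (Real.exp t - 1)) t ≤ 0 := by
    intro t ht
    rw [(hHd t ht).deriv]
    apply div_nonpos_of_nonpos_of_nonneg _ (sq_nonneg _)
    nlinarith [key2 t]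
  have htend : Tendsto (fun t => Real.log (F t) / (Real.exp t - 1)) (𝓝[≠] (0:ℝ)) (𝓝 mm) := by
    have h1 : Tendsto (fun t => Real.log (F t) / t) (𝓝[≠] (0:ℝ)) (𝓝 mm) := by
      have h0 := hasDerivAt_iff_tendsto_slope.mp (hGd 0)
      rw [hA0, hF0, div_one] at h0
      exact h0.congr fun t => by
        rw [slope_def_field]; rw [hF0, Real.log_one]; ring_nf
    have h2 : Tendsto (fun t => (Real.exp t - 1) / t) (𝓝[≠] (0:ℝ)) (𝓝 1) := by
      have h0 := hasDerivAt_iff_tendsto_slope.mp (Real.hasDerivAt_exp 0)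
      rw [Real.exp_zero] at h0
      exact h0.congr fun t => by rw [slope_def_field]; rw [Real.exp_zero]; ring_nf
    have h3 := h1.mul (h2.inv₀ one_ne_zero)
    rw [inv_one, mul_one] at h3
    refine Tendsto.congr' ?_ h3
    filter_upwards [self_mem_nhdsWithin] with t ht
    have ht' : t ≠ 0 := ht
    rw [inv_div]
    rw [div_mul_div_comm, mul_comm (Real.log (F t)) t, ← div_mul_div_comm, div_self ht', one_mul]
  have hGle : ∀ t, Real.log (F t) ≤ mm * (Real.exp t - 1) := by
    intro t
    rcases lt_trichotomy t 0 with h | h | h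
    · have hanti : AntitoneOn (fun t => Real.log (F t) / (Real.exp t - 1)) (Set.Iio 0) := by
        apply antitoneOn_of_deriv_nonpos (convex_Iio 0)
        · exact fun x hx => ((hHd x (ne_of_lt hx)).continuousAt).continuousWithinAt
        · rw [interior_Iio]
          exact fun x hx => (hHd x (ne_of_lt hx)).differentiableAt.differentiableWithinAt
        · rw [interior_Iio]
          exact fun x hx => hHd_nonpos x (ne_of_lt hx)
      have tendlt : Tendsto (fun t => Real.log (F t) / (Real.exp t - 1)) (𝓝[<] (0:ℝ)) (𝓝 mm) :=
        htend.mono_left (nhdsWithin_mono 0 fun x hx =>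
          Set.mem_compl_singleton_iff.mpr (ne_of_lt hx))
      have ev : ∀ᶠ s in 𝓝[<] (0:ℝ), Real.log (F s) / (Real.exp s - 1)
          ≤ Real.log (F t) / (Real.exp t - 1) := by
        filter_upwards [Ico_mem_nhdsLT_of_mem (Set.mem_Ioc.mpr ⟨h, le_refl 0⟩)] with s hs
        exact hanti h hs.2 hs.1
      have hle : mm ≤ Real.log (F t) / (Real.exp t - 1) := le_of_tendsto tendlt ev
      have hlt : Real.exp t - 1 < 0 := by
        have : Real.exp t < Real.exp 0 := Real.exp_lt_exp.2 h
        rw [Real.exp_zero] at this; linarith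
      calc Real.log (F t) = Real.log (F t) / (Real.exp t - 1) * (Real.exp t - 1) := by
            rw [div_mul_cancel₀ _ hlt.ne]
        _ ≤ mm * (Real.exp t - 1) := mul_le_mul_of_nonpos_right hle hlt.le
    · rw [h, hF0, Real.log_one, Real.exp_zero]; simp
    · have hanti : AntitoneOn (fun t => Real.log (F t) / (Real.exp t - 1)) (Set.Ioi 0) := by
        apply antitoneOn_of_deriv_nonpos (convex_Ioi 0)
        · exact fun x hx => ((hHd x (ne_of_gt hx)).continuousAt).continuousWithinAt
        · rw [interior_Ioi]
          exact fun x hx => (hHd x (ne_of_gt hx)).differentiableAt.differentiableWithinAt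
        · rw [interior_Ioi]
          exact fun x hx => hHd_nonpos x (ne_of_gt hx)
      have tendgt : Tendsto (fun t => Real.log (F t) / (Real.exp t - 1)) (𝓝[>] (0:ℝ)) (𝓝 mm) :=
        htend.mono_left (nhdsWithin_mono 0 fun x hx =>
          Set.mem_compl_singleton_iff.mpr (ne_of_gt hx))
      have ev : ∀ᶠ s in 𝓝[>] (0:ℝ), Real.log (F t) / (Real.exp t - 1)
          ≤ Real.log (F s) / (Real.exp s - 1) := by
        filter_upwards [Ioc_mem_nhdsGT_of_mem (Set.mem_Ico.mpr ⟨le_refl 0, h⟩)] with s hs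
        exact hanti hs.1 h hs.2
      have hle : Real.log (F t) / (Real.exp t - 1) ≤ mm := ge_of_tendsto tendgt ev
      have hgt : 0 < Real.exp t - 1 := by
        have : Real.exp 0 < Real.exp t := Real.exp_lt_exp.2 h
        rw [Real.exp_zero] at this; linarith
      calc Real.log (F t) = Real.log (F t) / (Real.exp t - 1) * (Real.exp t - 1) := by
            rw [div_mul_cancel₀ _ hgt.ne']
        _ ≤ mm * (Real.exp t - 1) := mul_le_mul_of_nonneg_right hle hgt.le
  have hsum : (∑ x, W q x * Real.exp (l * (f x - mm))) = Real.exp (-(l * mm)) * F l := by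
    rw [hF, Finset.mul_sum]
    refine Finset.sum_congr rfl fun x _ => ?_
    rw [show l * (f x - mm) = -(l * mm) + l * f x from by ring, Real.exp_add]
    ring
  rw [hsum, Real.log_mul (Real.exp_ne_zero _) (hFpos l).ne', Real.log_exp]
  have := hGle l
  nlinarith [this]

end SB

/-- Boucheron–Lugosi–Massart: if `Z = f(X₁,…,Xₙ)` for independent `{0,1}`-valued
random variables `Xᵢ` and a self-bounding `f`, then for all `λ ∈ ℝ`,
`log E[e^{λ(Z − E Z)}] ≤ (e^λ − λ − 1) E[Z]`. -/
theorem self_bounding_log_mgf_bound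
    {Ω : Type*} [MeasurableSpace Ω] (μ : Measure Ω) [IsProbabilityMeasure μ]
    {n : ℕ} (X : Fin n → Ω → Bool) (hXm : ∀ i, Measurable (X i))
    (hXind : iIndepFun X μ)
    (f : (Fin n → Bool) → ℝ) (hf : SelfBounding f)
    (Z : Ω → ℝ) (hZ : ∀ ω, Z ω = f (fun i => X i ω)) (l : ℝ) :
    Real.log (∫ ω, Real.exp (l * (Z ω - ∫ ω', Z ω' ∂μ)) ∂μ)
      ≤ (Real.exp l - l - 1) * ∫ ω, Z ω ∂μ := by
  obtain ⟨g, hgu, hg01, hgs⟩ := hf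
  have hZfun : Z = fun ω => f (fun i => X i ω) := funext hZ
  set T : Ω → (Fin n → Bool) := fun ω i => X i ω with hT_def
  have hT : Measurable T := measurable_pi_lambda T hXm
  set q : Fin n → Bool → ℝ := fun i b => (μ (X i ⁻¹' {b})).toReal with hq_def
  have hq0 : ∀ i b, 0 ≤ q i b := fun i b => ENNReal.toReal_nonneg
  have hq1 : ∀ i, q i true + q i false = 1 := by
    intro i
    have hdisj : Disjoint (X i ⁻¹' {true}) (X i ⁻¹' {false}) := by
      apply Set.disjoint_left.mpr
      intro ω h1 h2
      simp only [Set.mem_preimage, Set.mem_singleton_iff] at h1 h2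
      rw [h1] at h2
      exact Bool.noConfusion h2
    have hm2 : MeasurableSet (X i ⁻¹' {false}) := hXm i (measurableSet_singleton _)
    have hun := measure_union (μ := μ) hdisj hm2
    have hunion : X i ⁻¹' {true} ∪ X i ⁻¹' {false} = Set.univ := by
      ext ω
      simp only [Set.mem_union, Set.mem_preimage, Set.mem_singleton_iff, Set.mem_univ, iff_true]
      cases h : X i ω
      · right; rfl
      · left; rfl
    rw [hunion, measure_univ] at hun
    show (μ (X i ⁻¹' {true})).toReal + (μ (X i ⁻¹' {false})).toReal = 1
    rw [← ENNReal.toReal_add (measure_ne_top μ _) (measure_ne_top μ _), ← hun]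
    simp
  have hkey : ∀ h : (Fin n → Bool) → ℝ, ∫ ω, h (T ω) ∂μ = ∑ x, SB.W q x * h x := by
    intro h
    have hmeas_h : Measurable h := measurable_of_countable h
    have hprob : IsProbabilityMeasure (Measure.map T μ) :=
      Measure.isProbabilityMeasure_map hT.aemeasurable
    rw [← MeasureTheory.integral_map hT.aemeasurable hmeas_h.aestronglyMeasurable,
      MeasureTheory.integral_fintype (MeasureTheory.Integrable.of_finite)]
    refine Finset.sum_congr rfl fun x _ => ?_
    rw [smul_eq_mul]
    congr 1
    rw [measureReal_def, Measure.map_apply hT (measurableSet_singleton x)]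
    have hpre : T ⁻¹' {x} = ⋂ i, X i ⁻¹' {x i} := by
      ext ω
      simp only [Set.mem_preimage, Set.mem_singleton_iff, Set.mem_iInter, hT_def]
      exact funext_iff
    rw [hpre]
    have hbi : (⋂ i, X i ⁻¹' {x i}) = ⋂ i ∈ Finset.univ, X i ⁻¹' {x i} := by simp
    rw [hbi, hXind.measure_inter_preimage_eq_mul Finset.univ
      (fun i _ => measurableSet_singleton (x i)), ENNReal.toReal_prod]
    simp [SB.W, hq_def]
  have hZint : ∫ ω, Z ω ∂μ = ∑ x, SB.W q x * f x := by
    rw [hZfun]; exact hkey f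
  rw [hZint]
  have hint2 : ∫ ω, Real.exp (l * (Z ω - ∑ x, SB.W q x * f x)) ∂μ
      = ∑ x, SB.W q x * Real.exp (l * (f x - ∑ y, SB.W q y * f y)) := by
    rw [hZfun]; exact hkey (fun x => Real.exp (l * (f x - ∑ y, SB.W q y * f y)))
  rw [hint2]
  exact SB.cube_core n q hq0 hq1 f g hgu hg01 hgs l
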